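/- Convergence of the Heavy-Ball residual recursion with ideal initialization: Let W be a real symmetric matrix whose eigenvalues all lie in [-1,1], let α ∈ (0,1) and α̃ = (1-√α)/(1+√α). If the vectors r^{(t)} satisfy r^{(1)} = α̃ W r^{(0)} and r^{(t+1)} = 2 α̃ W r^{(t)} - α̃² r^{(t-1)} for all t ≥ 1, then ‖r^{(t)}‖_2 ≤ α̃^t · ‖r^{(0)}‖_2 for every t ≥ 0. -/

import Mathlib

open Matrix

private lemma cheb_scalar (x a : ℝ) (u : ℕ → ℝ)
    (h1 : u 1 = a * (x * u 0))
    (hrec : ∀ t, 1 ≤ t → u (t + 1) = 2 * a * x * u t - a ^ 2 * u (t - 1))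
    (hx1 : -1 ≤ x) (hx2 : x ≤ 1) :
    ∀ t, u t = u 0 * a ^ t * Real.cos (t * Real.arccos x) := by
  set θ := Real.arccos x with hθ
  have hcos : Real.cos θ = x := Real.cos_arccos hx1 hx2
  have key : ∀ t, u t = u 0 * a ^ t * Real.cos (t * θ) ∧
      u (t + 1) = u 0 * a ^ (t + 1) * Real.cos ((t + 1 : ℕ) * θ) := by
    intro t
    induction t with
    | zero =>
      constructor
      · simp
      · simp only [h1, ← hcos]
        push_cast
        ring
    | succ k ih =>
      refine ⟨ih.2, ?_⟩
      have hrec' := hrec (k + 1) (Nat.le_add_left 1 k)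
      have hstep : Real.cos (((k + 1 : ℕ) + 1 : ℕ) * θ)
          = 2 * Real.cos θ * Real.cos ((k + 1 : ℕ) * θ) - Real.cos ((k : ℕ) * θ) := by
        have e1 : (((k + 1 : ℕ) + 1 : ℕ) : ℝ) * θ = (k + 1 : ℕ) * θ + θ := by push_cast; ring
        have e2 : ((k : ℕ) : ℝ) * θ = (k + 1 : ℕ) * θ - θ := by push_cast; ring
        rw [e1, e2, Real.cos_add, Real.cos_sub]
        ring
      rw [hrec']
      simp only [Nat.add_sub_cancel]
      rw [ih.1, ih.2, hstep, hcos]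
      ring
  exact fun t => (key t).1

/-- Convergence of the Heavy-Ball residual recursion with ideal
initialization. -/
theorem heavy_ball_ideal_convergence
    {n : ℕ} (W : Matrix (Fin n) (Fin n) ℝ) (hsymm : W.IsSymm)
    (hW : ∀ x : Fin n → ℝ, (∑ i, (W.mulVec x i) ^ 2) ≤ ∑ i, (x i) ^ 2)
    (α : ℝ) (hα0 : 0 < α) (hα1 : α < 1)
    (atil : ℝ) (hatil : atil = (1 - Real.sqrt α) / (1 + Real.sqrt α))
    (r : ℕ → Fin n → ℝ)
    (hr1 : r 1 = atil • W.mulVec (r 0))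
    (hrrec : ∀ t, 1 ≤ t →
      r (t + 1) = (2 * atil) • W.mulVec (r t) - atil ^ 2 • r (t - 1)) :
    ∀ t : ℕ, Real.sqrt (∑ i, (r t i) ^ 2) ≤ atil ^ t * Real.sqrt (∑ i, (r 0 i) ^ 2) := by
  -- atil nonneg
  have hs1 : Real.sqrt α < 1 := by
    rw [show (1:ℝ) = Real.sqrt 1 by simp]
    exact Real.sqrt_lt_sqrt hα0.le hα1
  have hatil_nonneg : 0 ≤ atil := by
    rw [hatil]
    apply div_nonneg <;> nlinarith [Real.sqrt_nonneg α]
  -- Hermitian structure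
  have hH : W.IsHermitian := by
    rwa [Matrix.IsHermitian, Matrix.conjTranspose_eq_transpose_of_trivial]
  set b := hH.eigenvectorBasis with hb
  set lam := hH.eigenvalues with hlam
  -- symmetry of dot products
  have hsym : ∀ u v : Fin n → ℝ, u ⬝ᵥ W.mulVec v = (W.mulVec u) ⬝ᵥ v := by
    intro u v
    rw [Matrix.dotProduct_mulVec, ← Matrix.mulVec_transpose, hsymm]
  -- eigenvalue equation in dot-product form
  have heig : ∀ i (v : Fin n → ℝ), (⇑(b i) : Fin n → ℝ) ⬝ᵥ W.mulVec v = lam i * ((⇑(b i)) ⬝ᵥ v) := by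
    intro i v
    rw [hsym, hH.mulVec_eigenvectorBasis]
    simp [smul_dotProduct]
    rfl
  -- eigenvalues in [-1,1]
  have hnorm1 : ∀ i, ∑ j, ((b i : EuclideanSpace ℝ (Fin n)) j) ^ 2 = 1 := by
    intro i
    have h := b.orthonormal.1 i
    rw [EuclideanSpace.norm_eq] at h
    have h2 : ∑ j, ‖(b i : EuclideanSpace ℝ (Fin n)) j‖ ^ 2 = 1 := by
      have := congrArg (· ^ 2) h
      simpa [Real.sq_sqrt (Finset.sum_nonneg fun j _ => sq_nonneg _)] using this
    simpa [Real.norm_eq_abs, sq_abs] using h2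
  have hlam_bound : ∀ i, -1 ≤ lam i ∧ lam i ≤ 1 := by
    intro i
    have hWv := hW (⇑(b i))
    rw [hH.mulVec_eigenvectorBasis] at hWv
    have heq : ∑ j, (lam i * (b i : EuclideanSpace ℝ (Fin n)) j) ^ 2
        = lam i ^ 2 * ∑ j, ((b i : EuclideanSpace ℝ (Fin n)) j) ^ 2 := by
      rw [Finset.mul_sum]; apply Finset.sum_congr rfl; intro j _; ring
    rw [show (lam i • ⇑(b i) : Fin n → ℝ) = fun j => lam i * (b i : EuclideanSpace ℝ (Fin n)) j from rfl] at hWv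
    beta_reduce at hWv
    rw [heq, hnorm1 i] at hWv
    have hsq : lam i ^ 2 ≤ 1 := by linarith
    constructor <;> nlinarith [sq_nonneg (lam i - 1), sq_nonneg (lam i + 1)]
  -- coefficients
  set c : ℕ → Fin n → ℝ := fun t i => (⇑(b i) : Fin n → ℝ) ⬝ᵥ r t with hc
  have hc1 : ∀ i, c 1 i = atil * (lam i * c 0 i) := by
    intro i
    simp only [hc, hr1, dotProduct_smul]
    rw [heig i (r 0)]
    simp only [smul_eq_mul]
    try ring
  have hcrec : ∀ i t, 1 ≤ t → c (t + 1) i = 2 * atil * lam i * c t i - atil ^ 2 * c (t - 1) i := by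
    intro i t ht
    simp only [hc, hrrec t ht, dotProduct_sub, dotProduct_smul]
    rw [heig i (r t)]
    simp only [smul_eq_mul]
    try ring
  -- scalar bound
  have hcform : ∀ i t, c t i = c 0 i * atil ^ t * Real.cos (t * Real.arccos (lam i)) := by
    intro i
    exact cheb_scalar (lam i) atil (fun t => c t i) (hc1 i) (hcrec i)
      (hlam_bound i).1 (hlam_bound i).2
  -- Parseval
  have hpars : ∀ t, ∑ i, (r t i) ^ 2 = ∑ i, (c t i) ^ 2 := by
    intro t
    set R : EuclideanSpace ℝ (Fin n) := (WithLp.toLp 2 (r t) : EuclideanSpace ℝ (Fin n)) with hR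
    have hsum := b.sum_inner_mul_inner (𝕜 := ℝ) R R
    have hinner : ∀ i, (inner ℝ R (b i) : ℝ) * (inner ℝ (b i) R : ℝ) = (c t i) ^ 2 := by
      intro i
      have h1 : (inner ℝ (b i) R : ℝ) = c t i := by
        simp [hc, hR, PiLp.inner_apply, dotProduct, RCLike.inner_apply, mul_comm]
      have h2 : (inner ℝ R (b i) : ℝ) = c t i := by
        rw [real_inner_comm]; exact h1
      rw [h1, h2]
      ring
    rw [Finset.sum_congr rfl (fun i _ => hinner i)] at hsum
    rw [hsum]
    simp [hR, PiLp.inner_apply, RCLike.inner_apply, sq]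
    rw [← real_inner_self_eq_norm_mul_norm, PiLp.inner_apply]
    simp [mul_comm, sq]
  -- conclude
  intro t
  rw [hpars t, hpars 0]
  have hle : ∑ i, (c t i) ^ 2 ≤ (atil ^ t) ^ 2 * ∑ i, (c 0 i) ^ 2 := by
    rw [Finset.mul_sum]
    apply Finset.sum_le_sum
    intro i _
    rw [hcform i t]
    have hcos := Real.neg_one_le_cos (t * Real.arccos (lam i))
    have hcos2 := Real.cos_le_one (t * Real.arccos (lam i))
    have h3 : Real.cos (t * Real.arccos (lam i)) ^ 2 ≤ 1 := by nlinarith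
    nlinarith [sq_nonneg (c 0 i * atil ^ t), mul_nonneg (sq_nonneg (c 0 i * atil ^ t)) (sub_nonneg.2 h3)]
  calc Real.sqrt (∑ i, (c t i) ^ 2) ≤ Real.sqrt ((atil ^ t) ^ 2 * ∑ i, (c 0 i) ^ 2) :=
        Real.sqrt_le_sqrt hle
    _ = atil ^ t * Real.sqrt (∑ i, (c 0 i) ^ 2) := by
        rw [Real.sqrt_mul (sq_nonneg _), Real.sqrt_sq (pow_nonneg hatil_nonneg t)]
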